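/- Necessary condition (discrete Pontryagin minimum principle for completely observed control): in the discrete-time finite-state setting, if $u^*$ is a globally optimal control sequence, then for every time $t$ and every state $s$ with $p^*_t(s) > 0$, $u^*_t(s)$ minimizes $u \mapsto \mathcal{H}(t,s,u,w^*_{t+dt}) = f(t,s,u)+\sum_{s'}P_u(s,s')w^*_{t+dt}(s') - w^*_{t+dt}(s)$, where $p^*$ and $w^*$ are the forward distribution and backward value function of $u^*$. -/

import Mathlib

open Finset

/-- Forward state distribution for state-feedback controls. -/
def pFb {S U : Type} [Fintype S] (P : U → S → S → ℝ) (p0 : S → ℝ)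
    (u : ℕ → S → U) : ℕ → S → ℝ
  | 0 => p0
  | (t+1) => fun s' => ∑ s : S, pFb P p0 u t s * P (u t s) s s'

/-- Backward value function for state-feedback controls, indexed by the number
`k` of remaining steps. -/
def wbAux {S U : Type} [Fintype S] (P : U → S → S → ℝ)
    (f : ℕ → S → U → ℝ) (g : S → ℝ) (N : ℕ) (u : ℕ → S → U) : ℕ → S → ℝ
  | 0 => g
  | (k+1) => fun s =>
      f (N - (k+1)) s (u (N - (k+1)) s)
        + ∑ s' : S, P (u (N - (k+1)) s) s s' * wbAux P f g N u k s'

/-- Backward value function at time `t`, with `w_N = g`. -/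
def wbVal {S U : Type} [Fintype S] (P : U → S → S → ℝ)
    (f : ℕ → S → U → ℝ) (g : S → ℝ) (N : ℕ) (u : ℕ → S → U) (t : ℕ) : S → ℝ :=
  wbAux P f g N u (N - t)

/-- Total expected cost for state-feedback controls. -/
def Jb {S U : Type} [Fintype S] (P : U → S → S → ℝ) (p0 : S → ℝ)
    (f : ℕ → S → U → ℝ) (g : S → ℝ) (N : ℕ) (u : ℕ → S → U) : ℝ :=
  (∑ t ∈ Finset.range N, ∑ s : S, pFb P p0 u t s * f t s (u t s))
    + ∑ s : S, pFb P p0 u N s * g s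

/-- Discrete Hamiltonian `H(t,s,u,w) = f(t,s,u) + ∑ s' P_u(s,s') w(s') - w(s)`. -/
def Hd {S U : Type} [Fintype S] (P : U → S → S → ℝ) (f : ℕ → S → U → ℝ)
    (t : ℕ) (s : S) (v : U) (w : S → ℝ) : ℝ :=
  f t s v + (∑ s' : S, P v s s' * w s') - w s

section AuxLemmas

variable {S U : Type} [Fintype S] (P : U → S → S → ℝ) (f : ℕ → S → U → ℝ)
  (g : S → ℝ) (N : ℕ)

lemma wbAux_congr (u u' : ℕ → S → U) :
    ∀ k, (∀ r, N - k ≤ r → ∀ s, u r s = u' r s) →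
      wbAux P f g N u k = wbAux P f g N u' k := by
  intro k
  induction k with
  | zero => intro _; rfl
  | succ k ih =>
    intro h
    funext s
    have h1 : ∀ s, u (N - (k+1)) s = u' (N - (k+1)) s := fun s => h _ le_rfl s
    have h2 : wbAux P f g N u k = wbAux P f g N u' k :=
      ih (fun r hr s => h r (le_trans (by omega) hr) s)
    simp [wbAux, h1, h2]

lemma pFb_congr (p0 : S → ℝ) (u u' : ℕ → S → U) :
    ∀ t, (∀ r < t, ∀ s, u r s = u' r s) → pFb P p0 u t = pFb P p0 u' t := by
  intro t
  induction t with
  | zero => intro _; rfl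
  | succ t ih =>
    intro h
    have h1 := ih (fun r hr s => h r (by omega) s)
    funext s'
    simp [pFb, h1, h t (Nat.lt_succ_self t)]

lemma wbVal_step (u : ℕ → S → U) (t : ℕ) (ht : t < N) (s : S) :
    wbVal P f g N u t s
      = f t s (u t s) + ∑ s' : S, P (u t s) s s' * wbVal P f g N u (t+1) s' := by
  have hk : N - t = (N - (t+1)) + 1 := by omega
  have hNt : N - (N - (t+1) + 1) = t := by omega
  rw [wbVal, hk]
  simp [wbAux, hNt, wbVal]

lemma Jb_decomp (p0 : S → ℝ) (u : ℕ → S → U) :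
    ∀ d ≤ N, Jb P p0 f g N u =
      (∑ r ∈ Finset.range (N - d), ∑ s : S, pFb P p0 u r s * f r s (u r s))
        + ∑ s : S, pFb P p0 u (N - d) s * wbVal P f g N u (N - d) s := by
  intro d
  induction d with
  | zero =>
    intro _
    simp [Jb, wbVal, Nat.sub_self, wbAux]
  | succ d ih =>
    intro hd
    have hd' : d ≤ N := by omega
    have ht : N - (d+1) < N := by omega
    set t := N - (d+1) with ht'
    have hNd : N - d = t + 1 := by omega
    have hstep : ∑ s : S, pFb P p0 u t s * wbVal P f g N u t s
        = (∑ s : S, pFb P p0 u t s * f t s (u t s))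
          + ∑ s : S, pFb P p0 u (t+1) s * wbVal P f g N u (t+1) s := by
      calc ∑ s : S, pFb P p0 u t s * wbVal P f g N u t s
          = ∑ s : S, pFb P p0 u t s *
              (f t s (u t s) + ∑ s' : S, P (u t s) s s' * wbVal P f g N u (t+1) s') := by
            exact Finset.sum_congr rfl fun s _ => by rw [wbVal_step P f g N u t ht]
        _ = _ := by
            simp only [mul_add, Finset.sum_add_distrib, Finset.mul_sum]
            congr 1
            rw [Finset.sum_comm]
            apply Finset.sum_congr rfl
            intro s' _
            simp [pFb, Finset.sum_mul, mul_assoc]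
    rw [ih hd', hNd, Finset.sum_range_succ, hstep]
    ring

lemma Jb_decomp' (p0 : S → ℝ) (u : ℕ → S → U) (t : ℕ) (ht : t ≤ N) :
    Jb P p0 f g N u =
      (∑ r ∈ Finset.range t, ∑ s : S, pFb P p0 u r s * f r s (u r s))
        + ∑ s : S, pFb P p0 u t s * wbVal P f g N u t s := by
  have h := Jb_decomp P f g N p0 u (N - t) (by omega)
  rwa [show N - (N - t) = t from by omega] at h

end AuxLemmas

theorem discrete_pontryagin_necessary_condition_COSC
    {S U : Type} [Fintype S]
    (P : U → S → S → ℝ)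
    (hPnonneg : ∀ u s s', 0 ≤ P u s s')
    (hPsum : ∀ u s, ∑ s' : S, P u s s' = 1)
    (p0 : S → ℝ) (hp0nonneg : ∀ s, 0 ≤ p0 s) (hp0sum : ∑ s : S, p0 s = 1)
    (f : ℕ → S → U → ℝ) (g : S → ℝ) (N : ℕ)
    (uStar : ℕ → S → U)
    (hopt : ∀ u : ℕ → S → U, Jb P p0 f g N uStar ≤ Jb P p0 f g N u) :
    ∀ t < N, ∀ s : S, 0 < pFb P p0 uStar t s →
      ∀ v : U,
        Hd P f t s (uStar t s) (wbVal P f g N uStar (t+1))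
          ≤ Hd P f t s v (wbVal P f g N uStar (t+1)) := by
  classical
  intro t ht s0 hp v
  set w : S → ℝ := wbVal P f g N uStar (t+1) with hw
  set u' : ℕ → S → U :=
    fun r => if r = t then Function.update (uStar t) s0 v else uStar r with hu'
  have hu't : ∀ s, u' t s = if s = s0 then v else uStar t s := by
    intro s
    simp [hu', Function.update]
  have hagree_lt : ∀ r < t, ∀ s, uStar r s = u' r s := by
    intro r hr s
    have hne : r ≠ t := by omega
    simp only [hu', if_neg hne]
  have hagree_ge : ∀ r, t + 1 ≤ r → ∀ s, uStar r s = u' r s := by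
    intro r hr s
    have hne : r ≠ t := by omega
    simp only [hu', if_neg hne]
  have hp_eq : ∀ r ≤ t, pFb P p0 u' r = pFb P p0 uStar r := by
    intro r hr
    exact (pFb_congr P p0 uStar u' r (fun r' hr' s => hagree_lt r' (by omega) s)).symm
  have hw_eq : wbVal P f g N u' (t+1) = w := by
    rw [hw, wbVal, wbVal]
    exact (wbAux_congr P f g N uStar u' (N - (t+1))
      (fun r hr s => hagree_ge r (by omega) s)).symm
  -- Decompose both costs at time t and expand one step
  have hdecS := Jb_decomp' P f g N p0 uStar t (by omega)
  have hdecU := Jb_decomp' P f g N p0 u' t (by omega)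
  have hexpS : Jb P p0 f g N uStar =
      (∑ r ∈ Finset.range t, ∑ s : S, pFb P p0 uStar r s * f r s (uStar r s))
        + ∑ s : S, pFb P p0 uStar t s *
            (f t s (uStar t s) + ∑ s' : S, P (uStar t s) s s' * w s') := by
    rw [hdecS]
    congr 1
    exact Finset.sum_congr rfl fun s _ => by
      rw [wbVal_step P f g N uStar t ht]
  have hexpU : Jb P p0 f g N u' =
      (∑ r ∈ Finset.range t, ∑ s : S, pFb P p0 uStar r s * f r s (uStar r s))
        + ∑ s : S, pFb P p0 uStar t s *
            (f t s (u' t s) + ∑ s' : S, P (u' t s) s s' * w s') := by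
    rw [hdecU]
    congr 1
    · apply Finset.sum_congr rfl
      intro r hr
      have hr' : r < t := Finset.mem_range.mp hr
      rw [hp_eq r (by omega)]
      exact Finset.sum_congr rfl fun s _ => by rw [hagree_lt r hr' s]
    · rw [hp_eq t le_rfl]
      apply Finset.sum_congr rfl
      intro s _
      rw [wbVal_step P f g N u' t ht, hw_eq]
  have hle := hopt u'
  rw [hexpS, hexpU] at hle
  have hle2 : ∑ s : S, pFb P p0 uStar t s *
        (f t s (uStar t s) + ∑ s' : S, P (uStar t s) s s' * w s')
      ≤ ∑ s : S, pFb P p0 uStar t s *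
        (f t s (u' t s) + ∑ s' : S, P (u' t s) s s' * w s') := by linarith
  have hdiff : 0 ≤ ∑ s : S, pFb P p0 uStar t s *
      ((f t s (u' t s) + ∑ s' : S, P (u' t s) s s' * w s')
        - (f t s (uStar t s) + ∑ s' : S, P (uStar t s) s s' * w s')) := by
    simp only [mul_sub]
    rw [Finset.sum_sub_distrib]
    linarith
  have hsingle : ∑ s : S, pFb P p0 uStar t s *
      ((f t s (u' t s) + ∑ s' : S, P (u' t s) s s' * w s')
        - (f t s (uStar t s) + ∑ s' : S, P (uStar t s) s s' * w s'))
      = pFb P p0 uStar t s0 *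
        ((f t s0 v + ∑ s' : S, P v s0 s' * w s')
          - (f t s0 (uStar t s0) + ∑ s' : S, P (uStar t s0) s0 s' * w s')) := by
    rw [Finset.sum_eq_single s0]
    · rw [hu't s0]; simp
    · intro s _ hs
      rw [hu't s]
      simp [hs]
    · intro h; exact absurd (Finset.mem_univ s0) h
  rw [hsingle] at hdiff
  have hΔ : 0 ≤ (f t s0 v + ∑ s' : S, P v s0 s' * w s')
      - (f t s0 (uStar t s0) + ∑ s' : S, P (uStar t s0) s0 s' * w s') :=
    nonneg_of_mul_nonneg_right hdiff hp
  simp only [Hd]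
  linarith
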